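/- Let q be a prime power, let 1 ≤ k ≤ n be integers, let α ∈ (1,2) be real, and let W be a probability mass function on 𝔽_q^n. Then the uniform average over all k-dimensional 𝔽_q-linear subspaces C of 𝔽_q^n satisfies E_C [ q^{n(α−1)−kα} · ∑_{y ∈ 𝔽_q^n} ( ∑_{c ∈ C} W(y − c) )^α ] ≤ q^{(α−1)(n−k)} · ∑_{x ∈ 𝔽_q^n} W(x)^α + 1. In particular, if ε > 0 and ∑_{x} W(x)^α ≤ q^{−(α−1)(n−k+εn)}, then the average is at most q^{−(α−1)εn} + 1. -/

import Mathlib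

open scoped Classical
open Finset
set_option linter.unusedSectionVars false
set_option linter.unusedVariables false
set_option maxHeartbeats 1000000

lemma exists_linearEquiv_map_eq (F V : Type*) [Field F] [AddCommGroup V] [Module F V]
    {d d' : V} (hd : d ≠ 0) (hd' : d' ≠ 0) : ∃ e : V ≃ₗ[F] V, e d = d' := by
  have h1 : LinearIndepOn F id ({d} : Set V) := LinearIndepOn.singleton hd
  have h2 : LinearIndepOn F id ({d'} : Set V) := LinearIndepOn.singleton hd'
  let B := Module.Basis.extend h1
  let B' := Module.Basis.extend h2
  let i₀ : h1.extend (Set.subset_univ _) := ⟨d, h1.subset_extend _ rfl⟩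
  let j₀ : h2.extend (Set.subset_univ _) := ⟨d', h2.subset_extend _ rfl⟩
  let σ := (B.indexEquiv B').trans (Equiv.swap (B.indexEquiv B' i₀) j₀)
  refine ⟨B.equiv B' σ, ?_⟩
  have hBd : B i₀ = d := Module.Basis.extend_apply_self h1 i₀
  have hB'd : B' j₀ = d' := Module.Basis.extend_apply_self h2 j₀
  have : σ i₀ = j₀ := by simp [σ]
  have key : (B.equiv B' σ) (B i₀) = d' := by rw [Module.Basis.equiv_apply, this, hB'd]
  rwa [hBd] at key

lemma card_subspaces_containing_eq (F V : Type*) [Field F] [AddCommGroup V] [Module F V]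
    [Fintype V] (k : ℕ) {d d' : V} (hd : d ≠ 0) (hd' : d' ≠ 0) :
    (Finset.univ.filter (fun C : Submodule F V => Module.finrank F C = k ∧ d ∈ C)).card =
    (Finset.univ.filter (fun C : Submodule F V => Module.finrank F C = k ∧ d' ∈ C)).card := by
  obtain ⟨e, he⟩ := exists_linearEquiv_map_eq F V hd hd'
  apply Finset.card_bij' (fun C _ => Submodule.map (e : V →ₗ[F] V) C)
    (fun C _ => Submodule.map (e.symm : V →ₗ[F] V) C)
  · intro C hC
    simp only [Finset.mem_filter, Finset.mem_univ, true_and] at hC ⊢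
    constructor
    · rw [LinearEquiv.finrank_map_eq]; exact hC.1
    · rw [← he]; exact Submodule.mem_map_of_mem hC.2
  · intro C hC
    simp only [Finset.mem_filter, Finset.mem_univ, true_and] at hC ⊢
    constructor
    · rw [LinearEquiv.finrank_map_eq]; exact hC.1
    · have : e.symm d' = d := by rw [← he]; exact e.symm_apply_apply d
      rw [← this]; exact Submodule.mem_map_of_mem hC.2
  · intro C _
    ext x
    simp [Submodule.mem_map_equiv]
  · intro C _
    ext x
    simp [Submodule.mem_map_equiv]

section counting
variable {F V : Type*} [Field F] [Fintype F] [AddCommGroup V] [Module F V] [Fintype V] [DecidableEq V]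

lemma filter_mem_card (C : Submodule F V) :
    (Finset.univ.filter (fun x : V => x ∈ C)).card = Fintype.card F ^ Module.finrank F C := by
  rw [← Fintype.card_subtype]
  exact Module.card_eq_pow_finrank

lemma filter_mem_ne_card (C : Submodule F V) :
    (Finset.univ.filter (fun x : V => x ∈ C ∧ x ≠ 0)).card
      = Fintype.card F ^ Module.finrank F C - 1 := by
  have h : Finset.univ.filter (fun x : V => x ∈ C ∧ x ≠ 0)
      = (Finset.univ.filter (fun x : V => x ∈ C)).erase 0 := by
    ext x; simp [Finset.mem_erase, and_comm]
  rw [h, Finset.card_erase_of_mem (by simp [C.zero_mem]), filter_mem_card]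

lemma count_bound (k : ℕ) {d : V} (hd : d ≠ 0) :
    (Finset.univ.filter (fun C : Submodule F V => Module.finrank F C = k ∧ d ∈ C)).card
        * Fintype.card V
      ≤ (Finset.univ.filter (fun C : Submodule F V => Module.finrank F C = k)).card
        * Fintype.card F ^ k := by
  classical
  set M : V → ℕ := fun d' =>
    (Finset.univ.filter (fun C : Submodule F V => Module.finrank F C = k ∧ d' ∈ C)).card with hM
  set 𝒞 := Finset.univ.filter (fun C : Submodule F V => Module.finrank F C = k) with h𝒞
  set D := Finset.univ.filter (fun x : V => x ≠ 0) with hD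
  have hDcard : D.card = Fintype.card V - 1 := by
    have : D = Finset.univ.erase 0 := by ext x; simp [hD]
    rw [this, Finset.card_erase_of_mem (Finset.mem_univ _), Finset.card_univ]
  have hsum : ∑ d' ∈ D, M d' = ∑ C ∈ 𝒞, (Finset.univ.filter (fun x : V => x ∈ C ∧ x ≠ 0)).card := by
    have h1 : ∀ d' : V, M d' = ∑ C ∈ 𝒞, if d' ∈ C then 1 else 0 := by
      intro d'
      show (Finset.univ.filter (fun C : Submodule F V => Module.finrank F C = k ∧ d' ∈ C)).card
        = _
      rw [show (Finset.univ.filter (fun C : Submodule F V => Module.finrank F C = k ∧ d' ∈ C))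
        = 𝒞.filter (fun C => d' ∈ C) by rw [h𝒞, Finset.filter_filter]]
      exact Finset.card_filter _ _
    calc ∑ d' ∈ D, M d' = ∑ d' ∈ D, ∑ C ∈ 𝒞, if d' ∈ C then 1 else 0 :=
          Finset.sum_congr rfl (fun d' _ => h1 d')
      _ = ∑ C ∈ 𝒞, ∑ d' ∈ D, if d' ∈ C then 1 else 0 := Finset.sum_comm
      _ = ∑ C ∈ 𝒞, (D.filter (fun x => x ∈ C)).card := by
          refine Finset.sum_congr rfl (fun C _ => ?_)
          exact (Finset.card_filter _ _).symm
      _ = ∑ C ∈ 𝒞, (Finset.univ.filter (fun x : V => x ∈ C ∧ x ≠ 0)).card := by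
          refine Finset.sum_congr rfl (fun C _ => ?_)
          congr 1
          rw [hD, Finset.filter_filter]
          congr 1
          ext x
          exact and_comm
  have hconstsum : ∑ d' ∈ D, M d' = D.card * M d := by
    rw [Finset.sum_congr rfl (fun d' hd' => card_subspaces_containing_eq F V k
      (by simpa [hD] using hd') hd : ∀ d' ∈ D, M d' = M d)]
    rw [Finset.sum_const, smul_eq_mul]
  have hCsum : ∑ C ∈ 𝒞, (Finset.univ.filter (fun x : V => x ∈ C ∧ x ≠ 0)).card
      = 𝒞.card * (Fintype.card F ^ k - 1) := by
    rw [Finset.sum_congr rfl (fun C hC => ?_), Finset.sum_const, smul_eq_mul]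
    rw [filter_mem_ne_card]
    congr 2
    exact (Finset.mem_filter.1 hC).2
  have key : (Fintype.card V - 1) * M d = 𝒞.card * (Fintype.card F ^ k - 1) := by
    rw [← hDcard, ← hconstsum, hsum, hCsum]
  have hMle : M d ≤ 𝒞.card := by
    apply Finset.card_le_card
    intro C hC
    simp only [h𝒞, Finset.mem_filter] at hC ⊢
    exact ⟨hC.1, hC.2.1⟩
  obtain ⟨v1, hv⟩ : ∃ v1, Fintype.card V = v1 + 1 :=
    ⟨Fintype.card V - 1, (Nat.succ_pred_eq_of_pos Fintype.card_pos).symm⟩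
  obtain ⟨f1, hf⟩ : ∃ f1, Fintype.card F ^ k = f1 + 1 :=
    ⟨Fintype.card F ^ k - 1, (Nat.succ_pred_eq_of_pos (pow_pos Fintype.card_pos k)).symm⟩
  rw [hv, hf] at key ⊢
  simp only [Nat.add_sub_cancel] at key
  calc M d * (v1 + 1) = v1 * M d + M d := by ring
    _ ≤ 𝒞.card * f1 + 𝒞.card := add_le_add (le_of_eq key) hMle
    _ = 𝒞.card * (f1 + 1) := by ring

end counting

section helpers
variable {V : Type*} [AddCommGroup V] [Fintype V] [DecidableEq V]

lemma shift_sum (g : V → ℝ) (c : V) : ∑ y : V, g (y - c) = ∑ x : V, g x :=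
  Fintype.sum_equiv (Equiv.subRight c) _ _ (fun _ => rfl)

lemma double_shift_sum (s : Finset V) (g : V → ℝ) :
    ∑ y : V, ∑ c ∈ s, g (y - c) = s.card * ∑ x : V, g x := by
  rw [Finset.sum_comm]
  calc ∑ c ∈ s, ∑ y : V, g (y - c) = ∑ c ∈ s, ∑ x : V, g x :=
        Finset.sum_congr rfl (fun c _ => shift_sum g c)
    _ = s.card * ∑ x : V, g x := by rw [Finset.sum_const, nsmul_eq_mul]

end helpers

lemma my_rpow_add_le {x y p : ℝ} (hx : 0 ≤ x) (hy : 0 ≤ y) (hp : 0 ≤ p) (hp1 : p ≤ 1) :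
    (x + y) ^ p ≤ x ^ p + y ^ p := by
  have h := NNReal.rpow_add_le_add_rpow x.toNNReal y.toNNReal hp hp1
  have h2 := NNReal.coe_le_coe.2 h
  simpa [NNReal.coe_rpow, Real.coe_toNNReal x hx, Real.coe_toNNReal y hy] using h2

section maindefs
variable {F V : Type*} [Field F] [Fintype F] [AddCommGroup V] [Module F V] [Fintype V] [DecidableEq V]

noncomputable def fC (W : V → ℝ) (C : Submodule F V) (y : V) : ℝ :=
  ∑ c ∈ Finset.univ.filter (fun c => c ∈ C), W (y - c)

noncomputable def TsumC (α : ℝ) (W : V → ℝ) (C : Submodule F V) : ℝ :=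
  ∑ y : V, ∑ c ∈ Finset.univ.filter (fun c => c ∈ C), W (y - c) * (fC W C y - W (y - c)) ^ (α - 1)

noncomputable def AsumC (W : V → ℝ) (C : Submodule F V) : ℝ :=
  ∑ y : V, ∑ c ∈ Finset.univ.filter (fun c => c ∈ C), W (y - c) * (fC W C y - W (y - c))

noncomputable def GW (W : V → ℝ) (d : V) : ℝ := ∑ y : V, W y * W (y - d)

variable {W : V → ℝ} {α : ℝ}

lemma fC_nonneg (hW : ∀ x, 0 ≤ W x) (C : Submodule F V) (y : V) : 0 ≤ fC W C y :=
  Finset.sum_nonneg (fun c _ => hW _)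

lemma le_fC (hW : ∀ x, 0 ≤ W x) {C : Submodule F V} {c : V} (hc : c ∈ C) (y : V) :
    W (y - c) ≤ fC W C y :=
  Finset.single_le_sum (fun i _ => hW _) (Finset.mem_filter.2 ⟨Finset.mem_univ _, hc⟩)

lemma pointwise_bound (hW : ∀ x, 0 ≤ W x) (hα1 : 1 < α) (hα2 : α < 2)
    (C : Submodule F V) (y : V) :
    fC W C y ^ α ≤ (∑ c ∈ Finset.univ.filter (fun c => c ∈ C), W (y - c) ^ α)
      + ∑ c ∈ Finset.univ.filter (fun c => c ∈ C),
          W (y - c) * (fC W C y - W (y - c)) ^ (α - 1) := by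
  have hf0 : 0 ≤ fC W C y := fC_nonneg hW C y
  have hsplit : fC W C y ^ α = ∑ c ∈ Finset.univ.filter (fun c => c ∈ C),
      W (y - c) * fC W C y ^ (α - 1) := by
    rw [← Finset.sum_mul]
    show fC W C y ^ α = fC W C y * fC W C y ^ (α - 1)
    rw [show α = 1 + (α - 1) by ring, Real.rpow_add' hf0 (by norm_num; linarith), Real.rpow_one]
    ring_nf
  rw [hsplit, ← Finset.sum_add_distrib]
  refine Finset.sum_le_sum (fun c hc => ?_)
  have hcC : c ∈ C := (Finset.mem_filter.1 hc).2
  have hWle : W (y - c) ≤ fC W C y := le_fC hW hcC y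
  have hsub : fC W C y ^ (α - 1) ≤ W (y - c) ^ (α - 1) + (fC W C y - W (y - c)) ^ (α - 1) := by
    have := my_rpow_add_le (hW (y - c)) (sub_nonneg.2 hWle) (by linarith : (0:ℝ) ≤ α - 1)
      (by linarith : α - 1 ≤ 1)
    simpa using this
  calc W (y - c) * fC W C y ^ (α - 1)
      ≤ W (y - c) * (W (y - c) ^ (α - 1) + (fC W C y - W (y - c)) ^ (α - 1)) :=
        mul_le_mul_of_nonneg_left hsub (hW _)
    _ = W (y - c) * W (y - c) ^ (α - 1) + W (y - c) * (fC W C y - W (y - c)) ^ (α - 1) := by ring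
    _ = W (y - c) ^ α + W (y - c) * (fC W C y - W (y - c)) ^ (α - 1) := by
        rw [show α = 1 + (α - 1) by ring, Real.rpow_add' (hW _) (by norm_num; linarith),
          Real.rpow_one]
        ring_nf

lemma S_bound (hW : ∀ x, 0 ≤ W x) (hα1 : 1 < α) (hα2 : α < 2) (C : Submodule F V) :
    (∑ y : V, fC W C y ^ α)
      ≤ ((Finset.univ.filter (fun c : V => c ∈ C)).card : ℝ) * (∑ x : V, W x ^ α)
        + TsumC α W C := by
  calc (∑ y : V, fC W C y ^ α)
      ≤ ∑ y : V, ((∑ c ∈ Finset.univ.filter (fun c => c ∈ C), W (y - c) ^ α)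
          + ∑ c ∈ Finset.univ.filter (fun c => c ∈ C),
              W (y - c) * (fC W C y - W (y - c)) ^ (α - 1)) :=
        Finset.sum_le_sum (fun y _ => pointwise_bound hW hα1 hα2 C y)
    _ = (∑ y : V, ∑ c ∈ Finset.univ.filter (fun c => c ∈ C), W (y - c) ^ α) + TsumC α W C := by
        rw [Finset.sum_add_distrib]; rfl
    _ = ((Finset.univ.filter (fun c : V => c ∈ C)).card : ℝ) * (∑ x : V, W x ^ α) + TsumC α W C :=
        congrArg (fun z => z + TsumC α W C)
          (double_shift_sum (Finset.univ.filter (fun c : V => c ∈ C)) (fun x => W x ^ α))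

lemma GW_nonneg (hW : ∀ x, 0 ≤ W x) (d : V) : 0 ≤ GW W d :=
  Finset.sum_nonneg (fun y _ => mul_nonneg (hW _) (hW _))

lemma GW_filter_sum_le (hW : ∀ x, 0 ≤ W x) (hW1 : ∑ x : V, W x = 1) :
    ∑ d ∈ Finset.univ.filter (fun d : V => d ≠ 0), GW W d ≤ 1 := by
  have h1 : ∑ d : V, GW W d = 1 := by
    show ∑ d : V, ∑ y : V, W y * W (y - d) = 1
    rw [Finset.sum_comm]
    calc ∑ y : V, ∑ d : V, W y * W (y - d)
        = ∑ y : V, W y * ∑ d : V, W (y - d) := by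
          refine Finset.sum_congr rfl (fun y _ => ?_); rw [Finset.mul_sum]
      _ = ∑ y : V, W y * 1 := by
          refine Finset.sum_congr rfl (fun y _ => ?_)
          rw [show ∑ d : V, W (y - d) = 1 from
            (Fintype.sum_equiv (Equiv.subLeft y) _ W (fun d => rfl)).trans hW1]
      _ = 1 := by simpa using hW1
  calc ∑ d ∈ Finset.univ.filter (fun d : V => d ≠ 0), GW W d
      ≤ ∑ d : V, GW W d := Finset.sum_le_sum_of_subset_of_nonneg (Finset.filter_subset _ _)
        (fun d _ _ => GW_nonneg hW d)
    _ = 1 := h1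

lemma A_eq (hW : ∀ x, 0 ≤ W x) (C : Submodule F V) :
    AsumC W C = ((Finset.univ.filter (fun c : V => c ∈ C)).card : ℝ)
      * ∑ d ∈ Finset.univ.filter (fun d : V => d ≠ 0 ∧ d ∈ C), GW W d := by
  have step1 : ∀ y : V, ∀ c ∈ Finset.univ.filter (fun c : V => c ∈ C),
      fC W C y - W (y - c) = ∑ c' ∈ (Finset.univ.filter (fun c : V => c ∈ C)).erase c,
        W (y - c') := by
    intro y c hc
    have h := Finset.add_sum_erase (Finset.univ.filter (fun c : V => c ∈ C))
      (fun c' => W (y - c')) hc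
    have hfc : fC W C y = ∑ c' ∈ Finset.univ.filter (fun c : V => c ∈ C), W (y - c') := rfl
    linarith
  have step2 : AsumC W C = ∑ c ∈ Finset.univ.filter (fun c : V => c ∈ C),
      ∑ c' ∈ (Finset.univ.filter (fun c : V => c ∈ C)).erase c,
        ∑ y : V, W (y - c) * W (y - c') := by
    show (∑ y : V, ∑ c ∈ _, _) = _
    rw [Finset.sum_comm]
    refine Finset.sum_congr rfl (fun c hc => ?_)
    calc ∑ y : V, W (y - c) * (fC W C y - W (y - c))
        = ∑ y : V, ∑ c' ∈ (Finset.univ.filter (fun c : V => c ∈ C)).erase c,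
            W (y - c) * W (y - c') := by
          refine Finset.sum_congr rfl (fun y _ => ?_)
          rw [step1 y c hc, Finset.mul_sum]
      _ = _ := Finset.sum_comm
  have step3 : ∀ c c' : V, ∑ y : V, W (y - c) * W (y - c') = GW W (c' - c) := by
    intro c c'
    show _ = ∑ y : V, W y * W (y - (c' - c))
    calc ∑ y : V, W (y - c) * W (y - c')
        = ∑ y : V, W (y - c) * W (y - c - (c' - c)) := by
          refine Finset.sum_congr rfl fun y _ => ?_
          congr 2
          abel
      _ = ∑ u : V, W u * W (u - (c' - c)) := shift_sum (fun u => W u * W (u - (c' - c))) c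
  have step4 : ∀ c ∈ Finset.univ.filter (fun c : V => c ∈ C),
      ∑ c' ∈ (Finset.univ.filter (fun c : V => c ∈ C)).erase c, GW W (c' - c)
        = ∑ d ∈ Finset.univ.filter (fun d : V => d ≠ 0 ∧ d ∈ C), GW W d := by
    intro c hc
    have hcC : c ∈ C := (Finset.mem_filter.1 hc).2
    refine Finset.sum_bij' (fun c' _ => c' - c) (fun d _ => d + c) ?_ ?_ ?_ ?_ ?_
    · intro c' hc'
      simp only [Finset.mem_erase, Finset.mem_filter, Finset.mem_univ, true_and] at hc' ⊢
      exact ⟨sub_ne_zero.2 hc'.1, C.sub_mem hc'.2 hcC⟩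
    · intro d hd
      simp only [Finset.mem_erase, Finset.mem_filter, Finset.mem_univ, true_and] at hd ⊢
      constructor
      · intro h; exact hd.1 (by simpa using congrArg (fun x => x - c) h)
      · exact C.add_mem hd.2 hcC
    · intro c' _; simp
    · intro d _; simp
    · intro c' _; rfl
  rw [step2]
  calc ∑ c ∈ Finset.univ.filter (fun c : V => c ∈ C),
      ∑ c' ∈ (Finset.univ.filter (fun c : V => c ∈ C)).erase c,
        ∑ y : V, W (y - c) * W (y - c')
      = ∑ c ∈ Finset.univ.filter (fun c : V => c ∈ C),
          ∑ d ∈ Finset.univ.filter (fun d : V => d ≠ 0 ∧ d ∈ C), GW W d := by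
        refine Finset.sum_congr rfl (fun c hc => ?_)
        rw [← step4 c hc]
        exact Finset.sum_congr rfl (fun c' _ => step3 c c')
    _ = _ := by rw [Finset.sum_const, nsmul_eq_mul]

lemma AsumC_nonneg (hW : ∀ x, 0 ≤ W x) (C : Submodule F V) : 0 ≤ AsumC W C :=
  Finset.sum_nonneg fun y _ => Finset.sum_nonneg fun c hc =>
    mul_nonneg (hW _) (sub_nonneg.2 (le_fC hW (Finset.mem_filter.1 hc).2 y))

end maindefs

lemma main_bound
    (q n k : ℕ) (hq : IsPrimePow q) (hk : 1 ≤ k) (hkn : k ≤ n)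
    (F : Type) [Field F] [Fintype F] (hF : Fintype.card F = q)
    (α : ℝ) (hα1 : 1 < α) (hα2 : α < 2)
    (W : (Fin n → F) → ℝ) (hW : ∀ x, 0 ≤ W x) (hW1 : ∑ x : Fin n → F, W x = 1) :
    (1 / ((Finset.univ.filter
        (fun C : Submodule F (Fin n → F) => Module.finrank F C = k)).card : ℝ)) *
      ∑ C ∈ Finset.univ.filter
          (fun C : Submodule F (Fin n → F) => Module.finrank F C = k),
        (q : ℝ) ^ ((n : ℝ) * (α - 1) - (k : ℝ) * α) *
          ∑ y : Fin n → F,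
            (∑ c ∈ Finset.univ.filter (fun c : Fin n → F => c ∈ C), W (y - c)) ^ α
      ≤ (q : ℝ) ^ (((α - 1) * ((n : ℝ) - (k : ℝ)))) *
          (∑ x : Fin n → F, W x ^ α) + 1 := by
  classical
  set 𝒞 := Finset.univ.filter (fun C : Submodule F (Fin n → F) => Module.finrank F C = k)
    with h𝒞
  have hq2 : 2 ≤ q := hq.two_le
  have hQ0 : (0:ℝ) < (q:ℝ) := by exact_mod_cast Nat.lt_of_lt_of_le Nat.zero_lt_two hq2
  have hβ0 : (0:ℝ) < α - 1 := by linarith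
  have hβ1 : α - 1 ≤ 1 := by linarith
  have hcardV : Fintype.card (Fin n → F) = q ^ n := by simp [Fintype.card_fun, hF]
  -- 𝒞 is nonempty
  have hne : 𝒞.Nonempty := by
    have li : LinearIndependent F ((Pi.basisFun F (Fin n)) ∘ (Fin.castLE hkn)) :=
      (Pi.basisFun F (Fin n)).linearIndependent.comp _ (Fin.castLE_injective hkn)
    refine ⟨Submodule.span F (Set.range ((Pi.basisFun F (Fin n)) ∘ (Fin.castLE hkn))), ?_⟩
    rw [h𝒞, Finset.mem_filter]
    exact ⟨Finset.mem_univ _, by rw [finrank_span_eq_card li, Fintype.card_fin]⟩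
  have hN0 : (0:ℝ) < (𝒞.card : ℝ) := by exact_mod_cast Finset.card_pos.2 hne
  have hK0 : (0:ℝ) < (q:ℝ)^k := pow_pos hQ0 k
  have hQn0 : (0:ℝ) < (q:ℝ)^n := pow_pos hQ0 n
  -- cardinality of the set of points of C
  have hfiltcard : ∀ C ∈ 𝒞, ((Finset.univ.filter (fun c : Fin n → F => c ∈ C)).card : ℝ)
      = (q:ℝ)^k := by
    intro C hC
    have h1 := filter_mem_card (F := F) C
    rw [(Finset.mem_filter.1 hC).2, hF] at h1
    exact_mod_cast congrArg (Nat.cast : ℕ → ℝ) h1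
  -- Step 1: pointwise bound on each subspace
  have key1 : ∀ C ∈ 𝒞, (∑ y : Fin n → F, fC W C y ^ α)
      ≤ (q:ℝ)^k * (∑ x : Fin n → F, W x ^ α) + TsumC α W C := by
    intro C hC
    have h := S_bound (F := F) hW hα1 hα2 C
    rwa [hfiltcard C hC] at h
  -- Hölder / Jensen step
  have hp : (1:ℝ) ≤ 1/(α-1) := by rw [le_div_iff₀ hβ0]; linarith
  have htn : ∀ i : Submodule F (Fin n → F) × (Fin n → F) × (Fin n → F),
      0 ≤ (if i.2.2 ∈ i.1 then fC W i.1 i.2.1 - W (i.2.1 - i.2.2) else 0) := by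
    intro i
    split
    · exact sub_nonneg.2 (le_fC hW (by assumption) _)
    · exact le_refl 0
  have hsum3 : ∀ g : Submodule F (Fin n → F) → (Fin n → F) → (Fin n → F) → ℝ,
      ∑ i ∈ 𝒞 ×ˢ ((Finset.univ : Finset (Fin n → F)) ×ˢ (Finset.univ : Finset (Fin n → F))),
        (if i.2.2 ∈ i.1 then g i.1 i.2.1 i.2.2 else 0)
      = ∑ C ∈ 𝒞, ∑ y : Fin n → F,
          ∑ c ∈ Finset.univ.filter (fun c : Fin n → F => c ∈ C), g C y c := by
    intro g
    rw [Finset.sum_product]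
    refine Finset.sum_congr rfl fun C _ => ?_
    rw [Finset.sum_product]
    refine Finset.sum_congr rfl fun y _ => ?_
    exact (Finset.sum_filter _ _).symm
  have hw1 : ∑ i ∈ 𝒞 ×ˢ ((Finset.univ : Finset (Fin n → F)) ×ˢ (Finset.univ : Finset (Fin n → F))),
      (1 / (𝒞.card:ℝ)) * ((q:ℝ)^k)⁻¹ * (if i.2.2 ∈ i.1 then W (i.2.1 - i.2.2) else 0) = 1 := by
    rw [← Finset.mul_sum, hsum3 (fun C y c => W (y - c))]
    have hin : ∀ C ∈ 𝒞, (∑ y : Fin n → F,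
        ∑ c ∈ Finset.univ.filter (fun c : Fin n → F => c ∈ C), W (y - c)) = (q:ℝ)^k := by
      intro C hC
      rw [double_shift_sum, hW1, mul_one, hfiltcard C hC]
    rw [Finset.sum_congr rfl hin, Finset.sum_const, nsmul_eq_mul]
    field_simp
  have hH := Real.arith_mean_le_rpow_mean
    (𝒞 ×ˢ ((Finset.univ : Finset (Fin n → F)) ×ˢ (Finset.univ : Finset (Fin n → F))))
    (fun i => (1 / (𝒞.card:ℝ)) * ((q:ℝ)^k)⁻¹ * (if i.2.2 ∈ i.1 then W (i.2.1 - i.2.2) else 0))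
    (fun i => (if i.2.2 ∈ i.1 then fC W i.1 i.2.1 - W (i.2.1 - i.2.2) else 0) ^ (α - 1))
    (fun i _ => by
      refine mul_nonneg (mul_nonneg (by positivity) (by positivity)) ?_
      split
      · exact hW _
      · exact le_refl 0)
    hw1
    (fun i _ => Real.rpow_nonneg (htn i) _)
    (p := 1/(α-1)) hp
  -- identify the two sums appearing in hH
  have hLHS : ∑ i ∈ 𝒞 ×ˢ ((Finset.univ : Finset (Fin n → F)) ×ˢ (Finset.univ : Finset (Fin n → F))),
      ((1 / (𝒞.card:ℝ)) * ((q:ℝ)^k)⁻¹ * (if i.2.2 ∈ i.1 then W (i.2.1 - i.2.2) else 0))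
        * ((if i.2.2 ∈ i.1 then fC W i.1 i.2.1 - W (i.2.1 - i.2.2) else 0) ^ (α - 1))
      = (1 / (𝒞.card:ℝ)) * ((q:ℝ)^k)⁻¹ * ∑ C ∈ 𝒞, TsumC α W C := by
    have hpt : ∀ i ∈ 𝒞 ×ˢ ((Finset.univ : Finset (Fin n → F)) ×ˢ (Finset.univ : Finset (Fin n → F))),
        ((1 / (𝒞.card:ℝ)) * ((q:ℝ)^k)⁻¹ * (if i.2.2 ∈ i.1 then W (i.2.1 - i.2.2) else 0))
          * ((if i.2.2 ∈ i.1 then fC W i.1 i.2.1 - W (i.2.1 - i.2.2) else 0) ^ (α - 1))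
        = (1 / (𝒞.card:ℝ)) * ((q:ℝ)^k)⁻¹ * (if i.2.2 ∈ i.1 then
            W (i.2.1 - i.2.2) * (fC W i.1 i.2.1 - W (i.2.1 - i.2.2)) ^ (α - 1) else 0) := by
      intro i _
      by_cases h : i.2.2 ∈ i.1
      · simp only [if_pos h]; ring
      · simp [h]
    rw [Finset.sum_congr rfl hpt, ← Finset.mul_sum,
      hsum3 (fun C y c => W (y - c) * (fC W C y - W (y - c)) ^ (α - 1))]
    rfl
  have hRHS : ∑ i ∈ 𝒞 ×ˢ ((Finset.univ : Finset (Fin n → F)) ×ˢ (Finset.univ : Finset (Fin n → F))),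
      ((1 / (𝒞.card:ℝ)) * ((q:ℝ)^k)⁻¹ * (if i.2.2 ∈ i.1 then W (i.2.1 - i.2.2) else 0))
        * ((if i.2.2 ∈ i.1 then fC W i.1 i.2.1 - W (i.2.1 - i.2.2) else 0) ^ (α - 1)) ^ (1/(α-1))
      = (1 / (𝒞.card:ℝ)) * ((q:ℝ)^k)⁻¹ * ∑ C ∈ 𝒞, AsumC W C := by
    have hpt : ∀ i ∈ 𝒞 ×ˢ ((Finset.univ : Finset (Fin n → F)) ×ˢ (Finset.univ : Finset (Fin n → F))),
        ((1 / (𝒞.card:ℝ)) * ((q:ℝ)^k)⁻¹ * (if i.2.2 ∈ i.1 then W (i.2.1 - i.2.2) else 0))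
          * ((if i.2.2 ∈ i.1 then fC W i.1 i.2.1 - W (i.2.1 - i.2.2) else 0) ^ (α - 1)) ^ (1/(α-1))
        = (1 / (𝒞.card:ℝ)) * ((q:ℝ)^k)⁻¹ * (if i.2.2 ∈ i.1 then
            W (i.2.1 - i.2.2) * (fC W i.1 i.2.1 - W (i.2.1 - i.2.2)) else 0) := by
      intro i _
      rw [← Real.rpow_mul (htn i), mul_one_div_cancel (ne_of_gt hβ0), Real.rpow_one]
      by_cases h : i.2.2 ∈ i.1
      · simp only [if_pos h]; ring
      · simp [h]
    rw [Finset.sum_congr rfl hpt, ← Finset.mul_sum,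
      hsum3 (fun C y c => W (y - c) * (fC W C y - W (y - c)))]
    rfl
  rw [hLHS, hRHS, one_div_one_div] at hH
  -- bound the pair-counting sum
  have hMd : ∀ d : Fin n → F, d ≠ 0 →
      ((𝒞.filter (fun C => d ∈ C)).card : ℝ) * (q:ℝ)^n ≤ (𝒞.card : ℝ) * (q:ℝ)^k := by
    intro d hd
    have h := count_bound (F := F) (V := Fin n → F) k hd
    rw [hcardV, hF] at h
    have hff : 𝒞.filter (fun C => d ∈ C)
        = Finset.univ.filter
            (fun C : Submodule F (Fin n → F) => Module.finrank F C = k ∧ d ∈ C) := by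
      rw [h𝒞, Finset.filter_filter]
    rw [hff]
    exact_mod_cast h
  have hAC : ∀ C ∈ 𝒞, AsumC W C
      = (q:ℝ)^k * ∑ d ∈ Finset.univ.filter (fun d : Fin n → F => d ≠ 0 ∧ d ∈ C), GW W d := by
    intro C hC
    rw [A_eq hW C, hfiltcard C hC]
  have hsumA : ∑ C ∈ 𝒞, AsumC W C ≤ (q:ℝ)^k * ((𝒞.card:ℝ) * (q:ℝ)^k / (q:ℝ)^n) := by
    calc ∑ C ∈ 𝒞, AsumC W C
        = (q:ℝ)^k * ∑ C ∈ 𝒞,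
            ∑ d ∈ Finset.univ.filter (fun d : Fin n → F => d ≠ 0 ∧ d ∈ C), GW W d := by
          rw [Finset.mul_sum]; exact Finset.sum_congr rfl hAC
      _ = (q:ℝ)^k * ∑ d ∈ Finset.univ.filter (fun d : Fin n → F => d ≠ 0),
            ((𝒞.filter (fun C => d ∈ C)).card : ℝ) * GW W d := by
          congr 1
          calc ∑ C ∈ 𝒞, ∑ d ∈ Finset.univ.filter (fun d : Fin n → F => d ≠ 0 ∧ d ∈ C), GW W d
              = ∑ C ∈ 𝒞, ∑ d ∈ Finset.univ.filter (fun d : Fin n → F => d ≠ 0),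
                  if d ∈ C then GW W d else 0 := by
                refine Finset.sum_congr rfl fun C _ => ?_
                rw [← Finset.filter_filter, Finset.sum_filter]
            _ = ∑ d ∈ Finset.univ.filter (fun d : Fin n → F => d ≠ 0),
                  ∑ C ∈ 𝒞, if d ∈ C then GW W d else 0 := Finset.sum_comm
            _ = ∑ d ∈ Finset.univ.filter (fun d : Fin n → F => d ≠ 0),
                  ((𝒞.filter (fun C => d ∈ C)).card : ℝ) * GW W d := by
                refine Finset.sum_congr rfl fun d _ => ?_
                rw [← Finset.sum_filter, Finset.sum_const, nsmul_eq_mul]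
      _ ≤ (q:ℝ)^k * ∑ d ∈ Finset.univ.filter (fun d : Fin n → F => d ≠ 0),
            ((𝒞.card:ℝ) * (q:ℝ)^k / (q:ℝ)^n) * GW W d := by
          refine mul_le_mul_of_nonneg_left (Finset.sum_le_sum fun d hd => ?_) hK0.le
          have hd0 : d ≠ 0 := (Finset.mem_filter.1 hd).2
          refine mul_le_mul_of_nonneg_right ?_ (GW_nonneg hW d)
          rw [le_div_iff₀ hQn0]
          exact hMd d hd0
      _ = (q:ℝ)^k * (((𝒞.card:ℝ) * (q:ℝ)^k / (q:ℝ)^n)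
            * ∑ d ∈ Finset.univ.filter (fun d : Fin n → F => d ≠ 0), GW W d) := by
          congr 1
          rw [Finset.mul_sum]
      _ ≤ (q:ℝ)^k * (((𝒞.card:ℝ) * (q:ℝ)^k / (q:ℝ)^n) * 1) := by
          gcongr
          exact GW_filter_sum_le hW hW1
      _ = (q:ℝ)^k * ((𝒞.card:ℝ) * (q:ℝ)^k / (q:ℝ)^n) := by ring
  have hAfinal : (1 / (𝒞.card:ℝ)) * ((q:ℝ)^k)⁻¹ * ∑ C ∈ 𝒞, AsumC W C
      ≤ (q:ℝ)^k / (q:ℝ)^n := by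
    calc (1 / (𝒞.card:ℝ)) * ((q:ℝ)^k)⁻¹ * ∑ C ∈ 𝒞, AsumC W C
        ≤ (1 / (𝒞.card:ℝ)) * ((q:ℝ)^k)⁻¹ * ((q:ℝ)^k * ((𝒞.card:ℝ) * (q:ℝ)^k / (q:ℝ)^n)) :=
          mul_le_mul_of_nonneg_left hsumA (by positivity)
      _ = (q:ℝ)^k / (q:ℝ)^n := by field_simp
  have hT : (1/(𝒞.card:ℝ)) * ∑ C ∈ 𝒞, TsumC α W C
      ≤ (q:ℝ)^k * ((q:ℝ)^k/(q:ℝ)^n)^(α-1) := by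
    have hAsum0 : 0 ≤ (1 / (𝒞.card:ℝ)) * ((q:ℝ)^k)⁻¹ * ∑ C ∈ 𝒞, AsumC W C := by
      refine mul_nonneg (by positivity) (Finset.sum_nonneg fun C _ => AsumC_nonneg hW C)
    have h2 : ((1 / (𝒞.card:ℝ)) * ((q:ℝ)^k)⁻¹ * ∑ C ∈ 𝒞, AsumC W C) ^ (α-1)
        ≤ ((q:ℝ)^k/(q:ℝ)^n) ^ (α-1) := Real.rpow_le_rpow hAsum0 hAfinal hβ0.le
    calc (1/(𝒞.card:ℝ)) * ∑ C ∈ 𝒞, TsumC α W C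
        = (q:ℝ)^k * ((1 / (𝒞.card:ℝ)) * ((q:ℝ)^k)⁻¹ * ∑ C ∈ 𝒞, TsumC α W C) := by
          field_simp
      _ ≤ (q:ℝ)^k * ((q:ℝ)^k/(q:ℝ)^n)^(α-1) :=
          mul_le_mul_of_nonneg_left (hH.trans h2) hK0.le
  -- combine
  have hS : (1/(𝒞.card:ℝ)) * ∑ C ∈ 𝒞, (∑ y : Fin n → F, fC W C y ^ α)
      ≤ (q:ℝ)^k * (∑ x : Fin n → F, W x ^ α) + (q:ℝ)^k * ((q:ℝ)^k/(q:ℝ)^n)^(α-1) := by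
    calc (1/(𝒞.card:ℝ)) * ∑ C ∈ 𝒞, (∑ y : Fin n → F, fC W C y ^ α)
        ≤ (1/(𝒞.card:ℝ)) * ∑ C ∈ 𝒞,
            ((q:ℝ)^k * (∑ x : Fin n → F, W x ^ α) + TsumC α W C) :=
          mul_le_mul_of_nonneg_left (Finset.sum_le_sum key1) (by positivity)
      _ = (q:ℝ)^k * (∑ x : Fin n → F, W x ^ α) + (1/(𝒞.card:ℝ)) * ∑ C ∈ 𝒞, TsumC α W C := by
          rw [Finset.sum_add_distrib, Finset.sum_const, nsmul_eq_mul]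
          field_simp
      _ ≤ (q:ℝ)^k * (∑ x : Fin n → F, W x ^ α) + (q:ℝ)^k * ((q:ℝ)^k/(q:ℝ)^n)^(α-1) :=
          add_le_add_right hT _
  -- final rpow arithmetic
  have e1 : (q:ℝ)^((n:ℝ)*(α-1)-(k:ℝ)*α) * (q:ℝ)^k = (q:ℝ)^((α-1)*((n:ℝ)-(k:ℝ))) := by
    rw [← Real.rpow_natCast (q:ℝ) k, ← Real.rpow_add hQ0]
    congr 1
    ring
  have e2 : (q:ℝ)^((n:ℝ)*(α-1)-(k:ℝ)*α) * ((q:ℝ)^k * ((q:ℝ)^k/(q:ℝ)^n)^(α-1)) = 1 := by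
    rw [← Real.rpow_natCast (q:ℝ) k, ← Real.rpow_natCast (q:ℝ) n, ← Real.rpow_sub hQ0,
      ← Real.rpow_mul hQ0.le, ← Real.rpow_add hQ0, ← Real.rpow_add hQ0,
      show (n:ℝ)*(α-1)-(k:ℝ)*α + (((k:ℝ)) + ((k:ℝ)-(n:ℝ))*(α-1)) = 0 by ring, Real.rpow_zero]
  show (1 / (𝒞.card : ℝ)) *
      ∑ C ∈ 𝒞, (q : ℝ) ^ ((n : ℝ) * (α - 1) - (k : ℝ) * α)
        * ∑ y : Fin n → F, fC W C y ^ α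
    ≤ (q : ℝ) ^ ((α - 1) * ((n : ℝ) - (k : ℝ))) * (∑ x : Fin n → F, W x ^ α) + 1
  calc (1 / (𝒞.card : ℝ)) *
      ∑ C ∈ 𝒞, (q : ℝ) ^ ((n : ℝ) * (α - 1) - (k : ℝ) * α)
        * ∑ y : Fin n → F, fC W C y ^ α
      = (q : ℝ) ^ ((n : ℝ) * (α - 1) - (k : ℝ) * α)
          * ((1/(𝒞.card:ℝ)) * ∑ C ∈ 𝒞, (∑ y : Fin n → F, fC W C y ^ α)) := by
        rw [← Finset.mul_sum]
        ring
    _ ≤ (q : ℝ) ^ ((n : ℝ) * (α - 1) - (k : ℝ) * α)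
          * ((q:ℝ)^k * (∑ x : Fin n → F, W x ^ α) + (q:ℝ)^k * ((q:ℝ)^k/(q:ℝ)^n)^(α-1)) :=
        mul_le_mul_of_nonneg_left hS (Real.rpow_nonneg hQ0.le _)
    _ = (q : ℝ) ^ ((α - 1) * ((n : ℝ) - (k : ℝ))) * (∑ x : Fin n → F, W x ^ α) + 1 := by
        rw [mul_add, ← mul_assoc, e1, e2]

/-- Smoothing of random linear codes for Rényi parameter `α ∈ (1,2)`: the
average over all `k`-dimensional subspaces `C` of `𝔽_q^n` of the exponentiated
Rényi divergence `q^{(α-1)D_α(U_C + N ‖ U)}` is at most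
`q^{(α-1)(n-k)} ∑_x W(x)^α + 1`; in particular, under the rate condition
`∑_x W(x)^α ≤ q^{-(α-1)(n-k+εn)}` it is at most `q^{-(α-1)εn} + 1`. -/
theorem smoothing_random_linear_code_alpha_lt_two
    (q n k : ℕ) (hq : IsPrimePow q) (hk : 1 ≤ k) (hkn : k ≤ n)
    (F : Type) [Field F] [Fintype F] (hF : Fintype.card F = q)
    (α : ℝ) (hα1 : 1 < α) (hα2 : α < 2)
    (W : (Fin n → F) → ℝ) (hW : ∀ x, 0 ≤ W x) (hW1 : ∑ x : Fin n → F, W x = 1) :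
    ((1 / ((Finset.univ.filter
        (fun C : Submodule F (Fin n → F) => Module.finrank F C = k)).card : ℝ)) *
      ∑ C ∈ Finset.univ.filter
          (fun C : Submodule F (Fin n → F) => Module.finrank F C = k),
        (q : ℝ) ^ ((n : ℝ) * (α - 1) - (k : ℝ) * α) *
          ∑ y : Fin n → F,
            (∑ c ∈ Finset.univ.filter (fun c : Fin n → F => c ∈ C), W (y - c)) ^ α
      ≤ (q : ℝ) ^ (((α - 1) * ((n : ℝ) - (k : ℝ)))) *
          (∑ x : Fin n → F, W x ^ α) + 1) ∧
    (∀ ε : ℝ, 0 < ε →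
      (∑ x : Fin n → F, W x ^ α
          ≤ (q : ℝ) ^ (-((α - 1) * ((n : ℝ) - (k : ℝ) + ε * (n : ℝ))))) →
      (1 / ((Finset.univ.filter
          (fun C : Submodule F (Fin n → F) => Module.finrank F C = k)).card : ℝ)) *
        ∑ C ∈ Finset.univ.filter
            (fun C : Submodule F (Fin n → F) => Module.finrank F C = k),
          (q : ℝ) ^ ((n : ℝ) * (α - 1) - (k : ℝ) * α) *
            ∑ y : Fin n → F,
              (∑ c ∈ Finset.univ.filter (fun c : Fin n → F => c ∈ C), W (y - c)) ^ α
        ≤ (q : ℝ) ^ (-((α - 1) * ε * (n : ℝ))) + 1) := by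
  have hQ0 : (0:ℝ) < (q:ℝ) := by
    exact_mod_cast Nat.lt_of_lt_of_le Nat.zero_lt_two hq.two_le
  have h := main_bound q n k hq hk hkn F hF α hα1 hα2 W hW hW1
  refine ⟨h, fun ε hε hrate => h.trans ?_⟩
  have hmain : (q : ℝ) ^ (((α - 1) * ((n : ℝ) - (k : ℝ)))) * (∑ x : Fin n → F, W x ^ α)
      ≤ (q : ℝ) ^ (-((α - 1) * ε * (n : ℝ))) := by
    calc (q : ℝ) ^ (((α - 1) * ((n : ℝ) - (k : ℝ)))) * (∑ x : Fin n → F, W x ^ α)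
        ≤ (q : ℝ) ^ (((α - 1) * ((n : ℝ) - (k : ℝ))))
            * (q : ℝ) ^ (-((α - 1) * ((n : ℝ) - (k : ℝ) + ε * (n : ℝ)))) :=
          mul_le_mul_of_nonneg_left hrate (Real.rpow_nonneg hQ0.le _)
      _ = (q : ℝ) ^ (-((α - 1) * ε * (n : ℝ))) := by
          rw [← Real.rpow_add hQ0]
          congr 1
          ring
  exact add_le_add_left hmain 1
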